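/- Let D ≥ 3 and n ≥ 1. Let g_1, …, g_n be i.i.d. standard Gaussian vectors in ℝ^D, and let ω_1, …, ω_n be i.i.d. N(0,1) random variables independent of (g_1, …, g_n). Then for any fixed index a ∈ {1, …, n}, E [ ( Σ_{i ≠ a} (⟨g_i, g_a⟩ / ‖g_i‖²) ω_i )² ] = (n−1)/(D−2). -/

import Mathlib

open MeasureTheory ProbabilityTheory Filter

noncomputable section

/-- Euclidean inner product on `Fin D → ℝ`. -/
def euclDot {D : ℕ} (x y : Fin D → ℝ) : ℝ := ∑ i, x i * y i

/-- Squared Euclidean norm on `Fin n → ℝ`. -/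
def euclNormSq {n : ℕ} (x : Fin n → ℝ) : ℝ := ∑ i, (x i) ^ 2

/-- Euclidean (`ℓ²`) norm on `Fin n → ℝ`. -/
def euclNorm {n : ℕ} (x : Fin n → ℝ) : ℝ := Real.sqrt (euclNormSq x)

/-- Standard Gaussian measure on `Fin D → ℝ`: the coordinates are i.i.d. `N(0,1)`. -/
def stdGaussian (D : ℕ) : Measure (Fin D → ℝ) := Measure.pi fun _ => gaussianReal 0 1

/-- Law of an `N × D` random matrix (viewed as the tuple of its rows) with i.i.d. `N(0,1)`
entries. -/
def stdGaussianMatrix (N D : ℕ) : Measure (Fin N → Fin D → ℝ) :=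
  Measure.pi fun _ => stdGaussian D

/-- The span of the rows of `x` indexed by the subset `A`. -/
def rowSpan {N D : ℕ} (x : Fin N → Fin D → ℝ) (A : Finset (Fin N)) :
    Submodule ℝ (Fin D → ℝ) :=
  Submodule.span ℝ ((fun a => x a) '' (A : Set (Fin N)))

/-- `p` is the orthogonal projection (w.r.t. the Euclidean inner product) of `x`
onto the subspace `S`. -/
def IsOrthProjOn {D : ℕ} (S : Submodule ℝ (Fin D → ℝ)) (x p : Fin D → ℝ) : Prop :=
  p ∈ S ∧ ∀ v ∈ S, euclDot (x - p) v = 0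

/-- `t` is the minimum `ℓ²`-norm solution of the system `⟨x_a, t⟩ = y_a` for `a ∈ A`. -/
def IsMinNormSol {N D : ℕ} (x : Fin N → Fin D → ℝ) (A : Finset (Fin N))
    (yv : Fin N → ℝ) (t : Fin D → ℝ) : Prop :=
  (∀ a ∈ A, euclDot (x a) t = yv a) ∧
  ∀ t' : Fin D → ℝ, (∀ a ∈ A, euclDot (x a) t' = yv a) → euclNorm t ≤ euclNorm t'

/-- The noisy measurement `y = X θ* + ω`. -/
def yMeas {N D : ℕ} (x : Fin N → Fin D → ℝ) (θ : Fin D → ℝ) (w : Fin N → ℝ) : Fin N → ℝ :=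
  fun a => euclDot (x a) θ + w a

section SGauxOpens
open Real Set Topology
open scoped NNReal ENNReal
namespace SGaux

/-- standard gaussian on ℝ -/
def γ : Measure ℝ := gaussianReal 0 1

def φ (x : ℝ) : ℝ := gaussianPDFReal 0 1 x

lemma φ_nonneg (x : ℝ) : 0 ≤ φ x := gaussianPDFReal_nonneg 0 1 x

lemma φ_eq (x : ℝ) : φ x = (Real.sqrt (2 * π))⁻¹ * Real.exp (-(x ^ 2) / 2) := by
  simp [φ, gaussianPDFReal]

lemma γ_eq : γ = MeasureTheory.volume.withDensity
    (fun x => ((Real.toNNReal (φ x) : ℝ≥0) : ℝ≥0∞)) := by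
  rw [γ, gaussianReal_of_var_ne_zero 0 one_ne_zero]
  rfl

instance : IsProbabilityMeasure γ := by rw [γ]; infer_instance

lemma meas_φnn : Measurable (fun x => Real.toNNReal (φ x)) :=
  (measurable_gaussianPDFReal 0 1).real_toNNReal

lemma gauss_integrable_iff {f : ℝ → ℝ} :
    Integrable f γ ↔ Integrable (fun x => φ x * f x) := by
  rw [γ_eq, integrable_withDensity_iff_integrable_smul meas_φnn]
  refine integrable_congr (Filter.Eventually.of_forall fun x => ?_)
  simp [NNReal.smul_def, Real.coe_toNNReal _ (φ_nonneg x)]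

lemma gauss_integral_eq (f : ℝ → ℝ) :
    ∫ x, f x ∂γ = ∫ x, φ x * f x := by
  rw [γ_eq, integral_withDensity_eq_integral_smul meas_φnn]
  refine integral_congr_ae (Filter.Eventually.of_forall fun x => ?_)
  simp [NNReal.smul_def, Real.coe_toNNReal _ (φ_nonneg x)]





lemma key_bound (x : ℝ) : x^2 * rexp (-(1/2:ℝ)*x^2) ≤ 4 * rexp (-(1/4:ℝ)*x^2) := by
  have h1 : x^2 * rexp (-(1/2:ℝ)*x^2) = (x^2 * rexp (-(1/4:ℝ)*x^2)) * rexp (-(1/4:ℝ)*x^2) := by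
    rw [mul_assoc, ← Real.exp_add]; ring_nf
  rw [h1]
  have h2 : x^2 * rexp (-(1/4:ℝ)*x^2) ≤ 4 := by
    have h3 : x^2/4 + 1 ≤ rexp (x^2/4) := Real.add_one_le_exp _
    have h5 : rexp (-(1/4:ℝ)*x^2) * rexp (x^2/4) = 1 := by
      rw [← Real.exp_add]; ring_nf; exact Real.exp_zero
    nlinarith [Real.exp_pos (-(1/4:ℝ)*x^2), Real.exp_pos (x^2/4), sq_nonneg x]
  exact mul_le_mul_of_nonneg_right h2 (Real.exp_pos _).le

lemma integrable_sq_exp : Integrable (fun x : ℝ => x^2 * rexp (-(1/2:ℝ)*x^2)) := by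
  refine Integrable.mono' ((integrable_exp_neg_mul_sq (by norm_num : (0:ℝ) < 1/4)).const_mul 4)
    ?_ (Filter.Eventually.of_forall fun x => ?_)
  · exact ((continuous_pow 2).mul ((continuous_const.mul (continuous_pow 2)).rexp)).aestronglyMeasurable
  · rw [Real.norm_eq_abs, abs_of_nonneg (by positivity)]; exact key_bound x

lemma tendsto_aux : Tendsto (fun x : ℝ => -(x * rexp (-(1/2:ℝ)*x^2))) atTop (𝓝 0) := by
  rw [← neg_zero]
  refine Tendsto.neg ?_
  have h := Real.tendsto_pow_mul_exp_neg_atTop_nhds_zero 1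
  refine tendsto_of_tendsto_of_tendsto_of_le_of_le' tendsto_const_nhds (by simpa using h) ?_ ?_
  · filter_upwards [Filter.eventually_ge_atTop (0:ℝ)] with x hx; positivity
  · filter_upwards [Filter.eventually_ge_atTop (2:ℝ)] with x hx
    have h2 : -(1/2:ℝ)*x^2 ≤ -x := by nlinarith
    have := Real.exp_le_exp.2 h2
    simpa [pow_one] using mul_le_mul_of_nonneg_left this (by linarith : (0:ℝ) ≤ x)

lemma integral_Ioi_sq_exp :
    ∫ x in Ioi (0:ℝ), x^2 * rexp (-(1/2:ℝ)*x^2) = Real.sqrt (2*π) / 2 := by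
  have hderiv : ∀ x ∈ Ioi (0:ℝ), HasDerivAt (fun x : ℝ => -(x * rexp (-(1/2:ℝ)*x^2)))
      (x^2 * rexp (-(1/2:ℝ)*x^2) - rexp (-(1/2:ℝ)*x^2)) x := by
    intro x _
    have h := ((hasDerivAt_pow 2 x).const_mul (-(1/2):ℝ)).exp
    have h2 := ((hasDerivAt_id x).mul h).neg
    refine h2.congr_deriv (Eq.symm ?_)
    simp [pow_one]; ring
  have hint : IntegrableOn (fun x : ℝ => x^2 * rexp (-(1/2:ℝ)*x^2) - rexp (-(1/2:ℝ)*x^2))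
      (Ioi 0) :=
    (integrable_sq_exp.sub (integrable_exp_neg_mul_sq (by norm_num))).integrableOn
  have h0 := integral_Ioi_of_hasDerivAt_of_tendsto
    (Continuous.continuousWithinAt (by continuity)) hderiv hint tendsto_aux
  have hsub := integral_sub integrable_sq_exp.integrableOn
    ((integrable_exp_neg_mul_sq (by norm_num : (0:ℝ) < 1/2)).integrableOn (s := Ioi 0))
  rw [hsub] at h0
  have hg : ∫ x in Ioi (0:ℝ), rexp (-(1/2:ℝ)*x^2) = Real.sqrt (π / (1/2)) / 2 :=
    integral_gaussian_Ioi (1/2)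
  have : Real.sqrt (π / (1/2)) = Real.sqrt (2*π) := by norm_num [mul_comm]
  rw [hg, this] at h0
  have : (0:ℝ) * rexp (-(1/2:ℝ)*0^2) = 0 := by simp
  nlinarith [h0]

lemma integral_sq_exp : ∫ x : ℝ, x^2 * rexp (-(1/2:ℝ)*x^2) = Real.sqrt (2*π) := by
  have h := integral_comp_abs (f := fun x : ℝ => x^2 * rexp (-(1/2:ℝ)*x^2))
  simp only [sq_abs] at h
  rw [h, integral_Ioi_sq_exp]; ring





lemma φ_eq' (x : ℝ) : φ x = (Real.sqrt (2*π))⁻¹ * rexp (-(1/2:ℝ)*x^2) := by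
  rw [φ_eq]; congr 1; ring_nf

lemma integrable_id_γ : Integrable (fun x : ℝ => x) γ := by
  rw [gauss_integrable_iff]
  have : (fun x : ℝ => φ x * x) = fun x => (Real.sqrt (2*π))⁻¹ * (x * rexp (-(1/2:ℝ)*x^2)) := by
    funext x; rw [φ_eq']; ring
  rw [this]
  exact (integrable_mul_exp_neg_mul_sq (by norm_num)).const_mul _

lemma integral_id_γ : ∫ x : ℝ, x ∂γ = 0 := by
  rw [gauss_integral_eq]
  have : (fun x : ℝ => φ x * x) = fun x => (Real.sqrt (2*π))⁻¹ * (x * rexp (-(1/2:ℝ)*x^2)) := by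
    funext x; rw [φ_eq']; ring
  rw [this, integral_const_mul]
  -- reuse odd-integral result
  have hodd : ∫ x : ℝ, x * rexp (-(1/2:ℝ)*x^2) = 0 := by
    have hint : Integrable (fun x : ℝ => x * rexp (-(1/2:ℝ) * x ^ 2)) :=
      integrable_mul_exp_neg_mul_sq (by norm_num)
    set f : ℝ → ℝ := fun x => x * rexp (-(1/2:ℝ) * x ^ 2) with hf
    have h1 : ∫ x in Iic (0:ℝ), f (-x) = ∫ x in Ioi (-(0:ℝ)), f x := integral_comp_neg_Iic 0 f
    have hoddf : ∀ x, f (-x) = - f x := by intro x; simp only [hf]; rw [neg_sq]; ring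
    rw [neg_zero] at h1
    have hneg : ∫ x in Iic (0:ℝ), f (-x) = - ∫ x in Iic (0:ℝ), f x := by
      simp_rw [hoddf]; exact integral_neg f
    have h2 : ∫ x in Iic (0:ℝ), f x = - ∫ x in Ioi (0:ℝ), f x := by rw [hneg] at h1; linarith
    have h3 := intervalIntegral.integral_Iic_add_Ioi (b := (0:ℝ)) (μ := volume)
      hint.integrableOn hint.integrableOn
    rw [← h3, h2]; ring
  rw [hodd, mul_zero]

lemma integrable_sq_γ : Integrable (fun x : ℝ => x^2) γ := by
  rw [gauss_integrable_iff]
  have : (fun x : ℝ => φ x * x^2) = fun x =>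
      (Real.sqrt (2*π))⁻¹ * (x^2 * rexp (-(1/2:ℝ)*x^2)) := by
    funext x; rw [φ_eq']; ring
  rw [this]
  exact integrable_sq_exp.const_mul _

lemma integral_sq_γ : ∫ x : ℝ, x^2 ∂γ = 1 := by
  rw [gauss_integral_eq]
  have : (fun x : ℝ => φ x * x^2) = fun x =>
      (Real.sqrt (2*π))⁻¹ * (x^2 * rexp (-(1/2:ℝ)*x^2)) := by
    funext x; rw [φ_eq']; ring
  rw [this, integral_const_mul, integral_sq_exp]
  rw [inv_mul_cancel₀]
  positivity

lemma integrable_quad_γ {t : ℝ} (ht : 0 ≤ t) :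
    Integrable (fun x : ℝ => rexp (-(t * x^2))) γ := by
  rw [gauss_integrable_iff]
  have : (fun x : ℝ => φ x * rexp (-(t * x^2))) = fun x =>
      (Real.sqrt (2*π))⁻¹ * rexp (-(t + 1/2) * x^2) := by
    funext x; rw [φ_eq', mul_assoc, ← Real.exp_add]; congr 2; ring
  rw [this]
  exact (integrable_exp_neg_mul_sq (by linarith)).const_mul _

lemma integral_quad_γ {t : ℝ} (ht : 0 ≤ t) :
    ∫ x : ℝ, rexp (-(t * x^2)) ∂γ = Real.sqrt (1 + 2*t)⁻¹ := by
  rw [gauss_integral_eq]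
  have : (fun x : ℝ => φ x * rexp (-(t * x^2))) = fun x =>
      (Real.sqrt (2*π))⁻¹ * rexp (-(t + 1/2) * x^2) := by
    funext x; rw [φ_eq', mul_assoc, ← Real.exp_add]; congr 2; ring
  rw [this, integral_const_mul, integral_gaussian, ← Real.sqrt_inv, ← Real.sqrt_mul (by positivity)]
  congr 1
  have hπ : (0:ℝ) < π := Real.pi_pos
  field_simp
  ring


-- product measure lemmas specialised to i.i.d. real factors
lemma integrable_pi_prod : ∀ (m : ℕ) (f : Fin m → ℝ → ℝ), (∀ i, Integrable (f i) γ) →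
    Integrable (fun x : Fin m → ℝ => ∏ i, f i (x i)) (Measure.pi fun _ => γ) := by
  intro m
  induction m with
  | zero =>
      intro f hf
      simp only [Finset.univ_eq_empty, Finset.prod_empty]
      exact integrable_const _
  | succ n n_ih =>
      intro f hf
      have hmp := ((measurePreserving_piFinSuccAbove (fun _ : Fin (n+1) => γ) 0).symm)
      rw [← hmp.integrable_comp_emb (MeasurableEquiv.measurableEmbedding _)]
      simp_rw [MeasurableEquiv.piFinSuccAbove_symm_apply, Fin.insertNthEquiv,
        Fin.prod_univ_succ, Fin.insertNth_zero]
      simp only [Fin.zero_succAbove, Function.comp_def, Fin.cons_zero, Fin.cons_succ,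
        Equiv.coe_fn_mk]
      have h2 : Integrable (fun x : Fin n → ℝ => ∏ j, f (Fin.succ j) (x j))
          (Measure.pi fun _ => γ) := n_ih _ (fun i => hf _)
      exact Integrable.mul_prod (hf 0) h2

lemma integral_pi_prod : ∀ (m : ℕ) (f : Fin m → ℝ → ℝ),
    ∫ x : Fin m → ℝ, ∏ i, f i (x i) ∂(Measure.pi fun _ => γ) = ∏ i, ∫ x, f i x ∂γ := by
  intro m
  induction m with
  | zero =>
      intro f
      simp only [Finset.univ_eq_empty, Finset.prod_empty, integral_const, measure_univ,
        ENNReal.toReal_one, probReal_univ, smul_eq_mul, mul_one, one_smul]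
  | succ n n_ih =>
      intro f
      calc
        _ = ∫ x : ℝ × (Fin n → ℝ),
            f 0 x.1 * ∏ i : Fin n, f (Fin.succ i) (x.2 i) ∂(γ.prod (Measure.pi fun _ => γ)) := by
          rw [← ((measurePreserving_piFinSuccAbove (fun _ : Fin (n+1) => γ) 0).symm).integral_comp']
          refine integral_congr_ae (Filter.Eventually.of_forall fun x => ?_)
          show ∏ i : Fin (n+1), f i ((MeasurableEquiv.piFinSuccAbove (fun _ => ℝ) 0).symm x i)
            = f 0 x.1 * ∏ i : Fin n, f i.succ (x.2 i)
          rw [Fin.prod_univ_succ]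
          simp [MeasurableEquiv.piFinSuccAbove_symm_apply, Fin.insertNthEquiv,
            Fin.insertNth_zero, Fin.zero_succAbove]
        _ = (∫ x, f 0 x ∂γ) * ∏ i : Fin n, ∫ x, f (Fin.succ i) x ∂γ := by
          rw [← n_ih, ← integral_prod_mul]
        _ = ∏ i, ∫ x, f i x ∂γ := by rw [Fin.prod_univ_succ]

lemma integrable_pow_le2 {e : ℕ} (he : e ≤ 2) : Integrable (fun x : ℝ => x ^ e) γ := by
  interval_cases e
  · simpa using integrable_const (μ := γ) (1:ℝ)
  · simpa using integrable_id_γ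
  · exact integrable_sq_γ

lemma integral_pow_le2 {e : ℕ} (he : e ≤ 2) :
    ∫ x : ℝ, x ^ e ∂γ = if e = 1 then 0 else 1 := by
  interval_cases e
  · simp
  · simpa using integral_id_γ
  · simpa using integral_sq_γ

lemma pair_prod_eq {m : ℕ} (i j : Fin m) :
    (fun w : Fin m → ℝ => w i * w j)
      = fun w => ∏ k, (w k) ^ ((if k = i then 1 else 0) + (if k = j then 1 else 0)) := by
  funext w
  simp only [pow_add, Finset.prod_mul_distrib, pow_ite, pow_one, pow_zero,
    Finset.prod_ite_eq', Finset.mem_univ, if_true]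

lemma exp_le2 {m : ℕ} (i j k : Fin m) :
    ((if k = i then 1 else 0) + (if k = j then 1 else 0)) ≤ 2 := by
  split_ifs <;> norm_num

lemma integrable_mul_pair {m : ℕ} (i j : Fin m) :
    Integrable (fun w : Fin m → ℝ => w i * w j) (Measure.pi fun _ => γ) := by
  rw [pair_prod_eq]
  exact integrable_pi_prod m _ (fun k => integrable_pow_le2 (exp_le2 i j k))

lemma integral_mul_pair {m : ℕ} (i j : Fin m) :
    ∫ w, w i * w j ∂(Measure.pi fun _ : Fin m => γ) = if i = j then 1 else 0 := by
  rw [pair_prod_eq,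
    integral_pi_prod m (fun k x => x ^ ((if k = i then 1 else 0) + if k = j then 1 else 0))]
  by_cases hij : i = j
  · subst hij
    simp only [if_true]
    refine Finset.prod_eq_one fun k _ => ?_
    rcases eq_or_ne k i with h | h
    · subst h; simpa using integral_sq_γ
    · simp [h]
  · simp only [hij, if_false]
    refine Finset.prod_eq_zero (Finset.mem_univ i) ?_
    have : ((if i = i then 1 else 0) + (if i = j then 1 else 0)) = 1 := by simp [hij]
    rw [this]
    simpa using integral_id_γ

lemma sq_sum_expand {m : ℕ} (c : Fin m → ℝ) :
    (fun w : Fin m → ℝ => (∑ i, c i * w i)^2)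
      = fun w => ∑ i, ∑ j, (c i * c j) * (w i * w j) := by
  funext w
  rw [sq, Finset.sum_mul_sum]
  exact Finset.sum_congr rfl fun i _ => Finset.sum_congr rfl fun j _ => by ring

lemma integrable_sq_sum {m : ℕ} (c : Fin m → ℝ) :
    Integrable (fun w : Fin m → ℝ => (∑ i, c i * w i)^2) (Measure.pi fun _ => γ) := by
  rw [sq_sum_expand]
  exact integrable_finset_sum _ fun i _ =>
    integrable_finset_sum _ fun j _ => (integrable_mul_pair i j).const_mul _

lemma sq_sum_gauss {m : ℕ} (c : Fin m → ℝ) :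
    ∫⁻ w, ENNReal.ofReal ((∑ i, c i * w i)^2) ∂(Measure.pi fun _ : Fin m => γ)
      = ENNReal.ofReal (∑ i, (c i)^2) := by
  rw [← ofReal_integral_eq_lintegral_ofReal (integrable_sq_sum c)
    (Filter.Eventually.of_forall fun w => sq_nonneg _)]
  congr 1
  rw [sq_sum_expand,
    integral_finset_sum _ (fun i _ => integrable_finset_sum _ fun j _ =>
      (integrable_mul_pair i j).const_mul _)]
  have : ∀ i : Fin m, ∫ w, ∑ j, (c i * c j) * (w i * w j) ∂(Measure.pi fun _ : Fin m => γ)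
      = (c i)^2 := by
    intro i
    rw [integral_finset_sum _ (fun j _ => (integrable_mul_pair i j).const_mul _)]
    have : ∀ j : Fin m, ∫ w, (c i * c j) * (w i * w j) ∂(Measure.pi fun _ : Fin m => γ)
        = (c i * c j) * (if i = j then 1 else 0) := by
      intro j
      rw [integral_const_mul, integral_mul_pair]
    simp only [this, mul_ite, mul_one, mul_zero]
    rw [Finset.sum_ite_eq Finset.univ i (fun j => c i * c j)]
    simp [sq]
  simp only [this]

lemma pi_map_pair {ι : Type*} [Fintype ι] [DecidableEq ι] {α : Type*} [MeasurableSpace α]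
    (μ : Measure α) [IsProbabilityMeasure μ] {i j : ι} (hij : i ≠ j) :
    (Measure.pi fun _ : ι => μ).map (fun x => (x i, x j)) = μ.prod μ := by
  symm
  refine Measure.prod_eq fun s t hs ht => Eq.symm ?_
  rw [Measure.map_apply ((measurable_pi_apply i).prodMk (measurable_pi_apply j)) (hs.prod ht)]
  have hpre : (fun x : ι → α => (x i, x j)) ⁻¹' (s ×ˢ t)
      = Set.pi Set.univ (fun k => if k = i then s else if k = j then t else Set.univ) := by
    ext x
    simp only [Set.mem_preimage, Set.mem_prod, Set.mem_pi, Set.mem_univ, forall_true_left]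
    constructor
    · rintro ⟨h1, h2⟩ k
      split_ifs with h h'
      · subst h; exact h1
      · subst h'; exact h2
      · trivial
    · intro h
      refine ⟨?_, ?_⟩
      · have hi := h i; rw [if_pos rfl] at hi; exact hi
      · have hj := h j; rw [if_neg (Ne.symm hij), if_pos rfl] at hj; exact hj
  rw [hpre, Measure.pi_pi]
  rw [← Finset.mul_prod_erase Finset.univ _ (Finset.mem_univ i)]
  have hjmem : j ∈ Finset.univ.erase i := Finset.mem_erase.2 ⟨Ne.symm hij, Finset.mem_univ j⟩
  rw [← Finset.mul_prod_erase _ _ hjmem]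
  rw [if_pos rfl, if_neg (Ne.symm hij), if_pos rfl]
  have hone : ∀ k ∈ (Finset.univ.erase i).erase j,
      μ (if k = i then s else if k = j then t else Set.univ) = 1 := by
    intro k hk
    rw [Finset.mem_erase] at hk
    have hk2 := Finset.mem_erase.1 hk.2
    rw [if_neg hk2.1, if_neg hk.1]
    exact measure_univ
  rw [Finset.prod_congr rfl hone]
  simp

lemma exp_int {y : ℝ} (hy : 0 < y) :
    ∫⁻ t in Ioi (0:ℝ), ENNReal.ofReal (rexp (-(t*y))) = ENNReal.ofReal y⁻¹ := by
  have hint : IntegrableOn (fun t : ℝ => rexp (-(t*y))) (Ioi 0) := by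
    have h := exp_neg_integrableOn_Ioi 0 hy
    refine h.congr_fun (fun x _ => by ring_nf) measurableSet_Ioi
  rw [← ofReal_integral_eq_lintegral_ofReal hint
    (Filter.Eventually.of_forall fun t => (Real.exp_pos _).le)]
  congr 1
  have hderiv : ∀ t ∈ Ioi (0:ℝ), HasDerivAt (fun t : ℝ => -(y⁻¹ * rexp (-(t*y))))
      (rexp (-(t*y))) t := by
    intro t _
    have h1 : HasDerivAt (fun t : ℝ => -(t*y)) (-y) t := by
      exact (((hasDerivAt_id t).mul_const y).neg).congr_deriv (by simp)
    have h2 := (h1.exp.const_mul (y⁻¹)).neg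
    refine h2.congr_deriv (Eq.symm ?_)
    field_simp
  have htend : Tendsto (fun t : ℝ => -(y⁻¹ * rexp (-(t*y)))) atTop (𝓝 0) := by
    have hlin : Tendsto (fun t : ℝ => t*y) atTop atTop := Tendsto.atTop_mul_const hy tendsto_id
    have h0 : Tendsto (fun t : ℝ => rexp (-(t*y))) atTop (𝓝 0) :=
      Real.tendsto_exp_neg_atTop_nhds_zero.comp hlin
    simpa using (h0.const_mul (y⁻¹)).neg
  have hcont : ContinuousWithinAt (fun t : ℝ => -(y⁻¹ * rexp (-(t*y)))) (Ici 0) 0 :=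
    Continuous.continuousWithinAt (by continuity)
  have hv := integral_Ioi_of_hasDerivAt_of_tendsto hcont hderiv hint htend
  rw [hv]
  simp

lemma final_int (D : ℕ) (hD : 3 ≤ D) :
    ∫⁻ t in Ioi (0:ℝ), ENNReal.ofReal ((1+2*t) ^ (-(D:ℝ)/2))
      = ENNReal.ofReal (((D:ℝ)-2)⁻¹) := by
  have hD3 : (3:ℝ) ≤ (D:ℝ) := by exact_mod_cast hD
  set p : ℝ := (D:ℝ)/2 with hp
  have hp1 : (0:ℝ) < p - 1 := by rw [hp]; linarith
  have hpne : (1:ℝ) - p ≠ 0 := by linarith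
  set g : ℝ → ℝ := fun x => (2*(1-p))⁻¹ * (1+2*x)^((1:ℝ)-p) with hg
  have hderiv : ∀ x ∈ Ici (0:ℝ), HasDerivAt g ((1+2*x) ^ (-(D:ℝ)/2)) x := by
    intro x hx
    have hxpos : (0:ℝ) < 1 + 2*x := by simp only [Set.mem_Ici] at hx; linarith
    have h1 : HasDerivAt (fun x : ℝ => 1+2*x) 2 x := by
      simpa using ((hasDerivAt_id x).const_mul 2).const_add 1
    have h2 := (Real.hasDerivAt_rpow_const (x := 1+2*x) (p := 1-p)
      (Or.inl hxpos.ne')).comp x h1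
    have h3 := h2.const_mul (2*(1-p))⁻¹
    have hexp : -(D:ℝ)/2 = -p := by rw [hp]; ring
    rw [hexp]
    refine h3.congr_deriv (Eq.symm ?_)
    rw [show (1:ℝ)-p-1 = -p by ring]
    field_simp
  have gpos : ∀ x ∈ Ioi (0:ℝ), 0 ≤ (1+2*x) ^ (-(D:ℝ)/2) := by
    intro x hx
    have : (0:ℝ) < 1 + 2*x := by simp only [Set.mem_Ioi] at hx; linarith
    positivity
  have htend : Tendsto g atTop (𝓝 0) := by
    have hlin : Tendsto (fun x : ℝ => 1+2*x) atTop atTop :=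
      tendsto_atTop_add_const_left _ 1 (tendsto_id.const_mul_atTop two_pos)
    have h0 : Tendsto (fun x : ℝ => (1+2*x)^((1:ℝ)-p)) atTop (𝓝 0) := by
      rw [show (1:ℝ)-p = -(p-1) by ring]
      exact (tendsto_rpow_neg_atTop hp1).comp hlin
    simpa [hg] using h0.const_mul (2*(1-p))⁻¹
  have hIntOn : IntegrableOn (fun x : ℝ => (1+2*x) ^ (-(D:ℝ)/2)) (Ioi 0) :=
    integrableOn_Ioi_deriv_of_nonneg' hderiv gpos htend
  have hnn : 0 ≤ᵐ[volume.restrict (Ioi (0:ℝ))] fun x : ℝ => (1+2*x) ^ (-(D:ℝ)/2) :=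
    (ae_restrict_iff' measurableSet_Ioi).2 (Filter.Eventually.of_forall fun x hx => gpos x hx)
  rw [← ofReal_integral_eq_lintegral_ofReal hIntOn hnn]
  congr 1
  rw [integral_Ioi_of_hasDerivAt_of_nonneg' hderiv gpos htend, hg]
  norm_num
  have h2 : (D:ℝ) - 2 ≠ 0 := by linarith
  have h3 : (1:ℝ) - p ≠ 0 := hpne
  have h4 : (4:ℝ) - (D:ℝ)*2 ≠ 0 := by linarith
  rw [hp] at h3 ⊢
  field_simp [h4]
  rw [show (2:ℝ) - (D:ℝ) = -((D:ℝ)-2) by ring, div_neg, div_self h2, neg_neg]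
end SGaux
end SGauxOpens


section MainAux
open Real Set Topology
open scoped NNReal ENNReal

lemma measurable_euclNormSq {D : ℕ} : Measurable (fun u : Fin D → ℝ => euclNormSq u) := by
  unfold euclNormSq
  exact Finset.measurable_sum _ fun k _ => (measurable_pi_apply k).pow_const 2

lemma measurable_euclDot_pair {D : ℕ} :
    Measurable (fun p : (Fin D → ℝ) × (Fin D → ℝ) => euclDot p.1 p.2) := by
  unfold euclDot
  exact Finset.measurable_sum _ fun k _ =>
    ((measurable_pi_apply k).comp measurable_fst).mul ((measurable_pi_apply k).comp measurable_snd)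

instance instProbStdGaussian (D : ℕ) : IsProbabilityMeasure (stdGaussian D) :=
  inferInstanceAs (IsProbabilityMeasure (Measure.pi fun _ : Fin D => gaussianReal 0 1))

instance instProbStdGaussianMatrix (N D : ℕ) : IsProbabilityMeasure (stdGaussianMatrix N D) :=
  inferInstanceAs (IsProbabilityMeasure (Measure.pi fun _ : Fin N => stdGaussian D))

lemma stdGaussian_eq_pi (D : ℕ) : stdGaussian D = Measure.pi (fun _ : Fin D => SGaux.γ) := rfl

lemma euclNormSq_nonneg {D : ℕ} (u : Fin D → ℝ) : 0 ≤ euclNormSq u :=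
  Finset.sum_nonneg fun k _ => sq_nonneg _

lemma lintegral_inv_normSq (D : ℕ) (hD : 3 ≤ D) :
    ∫⁻ u, ENNReal.ofReal ((euclNormSq u)⁻¹) ∂(stdGaussian D)
      = ENNReal.ofReal (((D:ℝ)-2)⁻¹) := by
  have hγ0 : SGaux.γ ({0} : Set ℝ) = 0 := by
    have habs := gaussianReal_absolutelyContinuous 0 one_ne_zero
    exact habs (by simp)
  have hzero : (stdGaussian D) {u : Fin D → ℝ | euclNormSq u = 0} = 0 := by
    have hsub : {u : Fin D → ℝ | euclNormSq u = 0} ⊆ Set.pi Set.univ (fun _ => ({0} : Set ℝ)) := by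
      intro u hu k _
      have hz : ∀ j ∈ Finset.univ, (u j)^2 = 0 :=
        (Finset.sum_eq_zero_iff_of_nonneg fun j _ => sq_nonneg _).1 hu
      have := hz k (Finset.mem_univ k)
      have : u k = 0 := by
        have h2 := sq_eq_zero_iff.1 this
        exact h2
      simpa using this
    refine measure_mono_null hsub ?_
    rw [stdGaussian_eq_pi, Measure.pi_pi]
    exact Finset.prod_eq_zero (Finset.mem_univ (⟨0, by omega⟩ : Fin D)) hγ0
  have hae : ∀ᵐ u ∂stdGaussian D, 0 < euclNormSq u := by
    have hne : ∀ᵐ u ∂stdGaussian D, ¬ euclNormSq u = 0 := by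
      rw [ae_iff]
      simpa using hzero
    filter_upwards [hne] with u hu
    exact lt_of_le_of_ne (euclNormSq_nonneg u) (Ne.symm hu)
  have h1 : ∀ᵐ u ∂stdGaussian D, ENNReal.ofReal ((euclNormSq u)⁻¹)
      = ∫⁻ t in Ioi (0:ℝ), ENNReal.ofReal (rexp (-(t * euclNormSq u))) := by
    filter_upwards [hae] with u hu
    exact (SGaux.exp_int hu).symm
  rw [lintegral_congr_ae h1]
  have hmeasf : AEMeasurable
      (fun p : (Fin D → ℝ) × ℝ => ENNReal.ofReal (rexp (-(p.2 * euclNormSq p.1))))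
      ((stdGaussian D).prod (volume.restrict (Ioi 0))) := by
    refine Measurable.aemeasurable ?_
    refine Measurable.ennreal_ofReal ?_
    exact Real.measurable_exp.comp
      ((measurable_snd.mul (measurable_euclNormSq.comp measurable_fst)).neg)
  rw [lintegral_lintegral_swap hmeasf]
  have hinner : ∀ t ∈ Ioi (0:ℝ),
      ∫⁻ u, ENNReal.ofReal (rexp (-(t * euclNormSq u))) ∂stdGaussian D
        = ENNReal.ofReal ((1+2*t) ^ (-(D:ℝ)/2)) := by
    intro t ht
    have ht' : (0:ℝ) ≤ t := (le_of_lt ht)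
    have hb : (0:ℝ) < 1 + 2*t := by linarith
    have hprod : (fun u : Fin D → ℝ => rexp (-(t * euclNormSq u)))
        = fun u => ∏ k, rexp (-(t * (u k)^2)) := by
      funext u
      rw [← Real.exp_sum]
      congr 1
      simp [euclNormSq, Finset.mul_sum]
    have hint : Integrable (fun u : Fin D → ℝ => ∏ k, rexp (-(t * (u k)^2))) (stdGaussian D) := by
      rw [stdGaussian_eq_pi]
      exact SGaux.integrable_pi_prod D (fun k x => rexp (-(t * x^2)))
        (fun k => SGaux.integrable_quad_γ ht')
    calc ∫⁻ u, ENNReal.ofReal (rexp (-(t * euclNormSq u))) ∂stdGaussian D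
        = ∫⁻ u, ENNReal.ofReal (∏ k, rexp (-(t * (u k)^2))) ∂stdGaussian D := by
          refine lintegral_congr fun u => ?_
          rw [congrFun hprod u]
      _ = ENNReal.ofReal (∫ u, ∏ k, rexp (-(t * (u k)^2)) ∂stdGaussian D) :=
          (ofReal_integral_eq_lintegral_ofReal hint
            (Filter.Eventually.of_forall fun u =>
              Finset.prod_nonneg fun k _ => (Real.exp_pos _).le)).symm
      _ = ENNReal.ofReal ((1+2*t) ^ (-(D:ℝ)/2)) := by
          congr 1
          rw [stdGaussian_eq_pi, SGaux.integral_pi_prod D (fun _ x => rexp (-(t * x^2)))]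
          have h5 : ∀ i : Fin D, ∫ x, rexp (-(t * x^2)) ∂SGaux.γ = Real.sqrt (1+2*t)⁻¹ :=
            fun _ => SGaux.integral_quad_γ ht'
          rw [Finset.prod_congr rfl fun i _ => h5 i, Finset.prod_const, Finset.card_univ,
            Fintype.card_fin]
          rw [show ((1+2*t))⁻¹ = (1+2*t) ^ (-1:ℝ) from (Real.rpow_neg_one _).symm,
            Real.sqrt_eq_rpow, ← Real.rpow_natCast (((1+2*t) ^ (-1:ℝ)) ^ ((1:ℝ)/2)) D,
            ← Real.rpow_mul hb.le, ← Real.rpow_mul hb.le]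
          congr 1
          push_cast
          ring
  rw [setLIntegral_congr_fun measurableSet_Ioi hinner]
  exact SGaux.final_int D hD

end MainAux

/-- Let `D ≥ 3`, `n ≥ 1`, let `g_1, …, g_n` be i.i.d. standard Gaussian
vectors in `ℝ^D` and let `ω_1, …, ω_n` be i.i.d. `N(0,1)` variables independent of the `g_i`.
For any fixed index `a`, `E (∑_{i ≠ a} (⟨g_i, g_a⟩/‖g_i‖²) ω_i)² = (n−1)/(D−2)`. -/
theorem expected_squared_weighted_noise_sum (D n : ℕ) (hD : 3 ≤ D) (hn : 1 ≤ n) (a : Fin n) :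
    ∫⁻ gw, ENNReal.ofReal
        ((∑ i ∈ Finset.univ.erase a,
          (euclDot (gw.1 i) (gw.1 a) / euclNormSq (gw.1 i)) * gw.2 i) ^ 2)
        ∂((stdGaussianMatrix n D).prod (stdGaussian n)) =
      ENNReal.ofReal (((n : ℝ) - 1) / ((D : ℝ) - 2)) := by
  classical
  have hDr : (3:ℝ) ≤ (D:ℝ) := by exact_mod_cast hD
  set F : (Fin n → Fin D → ℝ) → Fin n → ℝ :=
    fun g i => euclDot (g i) (g a) / euclNormSq (g i) with hF
  have hmeasF : ∀ i, Measurable (fun g : Fin n → Fin D → ℝ => F g i) := by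
    intro i
    have h1 : Measurable (fun g : Fin n → Fin D → ℝ => euclDot (g i) (g a)) := by
      have := (measurable_euclDot_pair (D := D)).comp
        (f := fun g : Fin n → Fin D → ℝ => (g i, g a))
        ((measurable_pi_apply i).prodMk (measurable_pi_apply a))
      exact this
    simp only [hF]
    exact h1.div (measurable_euclNormSq.comp (measurable_pi_apply i))
  have hmeas_main : Measurable (fun gw : (Fin n → Fin D → ℝ) × (Fin n → ℝ) =>
      ENNReal.ofReal ((∑ i ∈ Finset.univ.erase a, F gw.1 i * gw.2 i)^2)) := by
    refine Measurable.ennreal_ofReal (Measurable.pow_const ?_ 2)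
    exact Finset.measurable_sum _ fun i _ =>
      ((hmeasF i).comp measurable_fst).mul ((measurable_pi_apply i).comp measurable_snd)
  rw [lintegral_prod _ hmeas_main.aemeasurable]
  have hw : ∀ g : Fin n → Fin D → ℝ,
      ∫⁻ w, ENNReal.ofReal ((∑ i ∈ Finset.univ.erase a, F g i * w i)^2) ∂stdGaussian n
        = ENNReal.ofReal (∑ i ∈ Finset.univ.erase a, (F g i)^2) := by
    intro g
    set c : Fin n → ℝ := fun i => if i = a then 0 else F g i with hc
    have hagree : ∀ i ∈ Finset.univ.erase a, F g i = c i := by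
      intro i hi
      rw [hc]
      simp only
      rw [if_neg (Finset.ne_of_mem_erase hi)]
    have hvanish : ∀ i, i ∉ Finset.univ.erase a → c i = 0 := by
      intro i hi
      have : i = a := by
        by_contra h
        exact hi (Finset.mem_erase.2 ⟨h, Finset.mem_univ i⟩)
      rw [hc]; simp [this]
    have hsum : ∀ w : Fin n → ℝ,
        ∑ i ∈ Finset.univ.erase a, F g i * w i = ∑ i, c i * w i := by
      intro w
      calc ∑ i ∈ Finset.univ.erase a, F g i * w i
          = ∑ i ∈ Finset.univ.erase a, c i * w i :=
            Finset.sum_congr rfl fun i hi => by rw [hagree i hi]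
        _ = ∑ i, c i * w i := by
            refine Finset.sum_subset (Finset.subset_univ _) fun i _ hi => ?_
            rw [hvanish i hi, zero_mul]
    have hsumsq : ∑ i, (c i)^2 = ∑ i ∈ Finset.univ.erase a, (F g i)^2 := by
      calc ∑ i, (c i)^2
          = ∑ i ∈ Finset.univ.erase a, (c i)^2 := by
            refine (Finset.sum_subset (Finset.subset_univ _) fun i _ hi => ?_).symm
            rw [hvanish i hi]
            ring
        _ = ∑ i ∈ Finset.univ.erase a, (F g i)^2 :=
            Finset.sum_congr rfl fun i hi => by rw [hagree i hi]
    calc ∫⁻ w, ENNReal.ofReal ((∑ i ∈ Finset.univ.erase a, F g i * w i)^2) ∂stdGaussian n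
        = ∫⁻ w, ENNReal.ofReal ((∑ i, c i * w i)^2) ∂stdGaussian n := by
          refine lintegral_congr fun w => ?_
          rw [hsum w]
      _ = ENNReal.ofReal (∑ i, (c i)^2) := by
          rw [stdGaussian_eq_pi, SGaux.sq_sum_gauss c]
      _ = ENNReal.ofReal (∑ i ∈ Finset.univ.erase a, (F g i)^2) := by rw [hsumsq]
  calc ∫⁻ g, ∫⁻ w, ENNReal.ofReal
          ((∑ i ∈ Finset.univ.erase a, F g i * w i)^2) ∂stdGaussian n ∂stdGaussianMatrix n D
      = ∫⁻ g, ∑ i ∈ Finset.univ.erase a,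
          ENNReal.ofReal ((F g i)^2) ∂stdGaussianMatrix n D := by
        refine lintegral_congr fun g => ?_
        rw [hw g, ENNReal.ofReal_sum_of_nonneg fun i _ => sq_nonneg _]
    _ = ∑ i ∈ Finset.univ.erase a,
          ∫⁻ g, ENNReal.ofReal ((F g i)^2) ∂stdGaussianMatrix n D :=
        lintegral_finset_sum _ fun i _ => ((hmeasF i).pow_const 2).ennreal_ofReal
    _ = ∑ _i ∈ Finset.univ.erase a, ENNReal.ofReal (((D:ℝ)-2)⁻¹) := by
        refine Finset.sum_congr rfl fun i hi => ?_
        have hia : i ≠ a := Finset.ne_of_mem_erase hi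
        have hG : Measurable (fun p : (Fin D → ℝ) × (Fin D → ℝ) =>
            ENNReal.ofReal ((euclDot p.1 p.2 / euclNormSq p.1)^2)) := by
          refine Measurable.ennreal_ofReal (Measurable.pow_const ?_ 2)
          exact measurable_euclDot_pair.div (measurable_euclNormSq.comp measurable_fst)
        have hpair : Measurable (fun g : Fin n → Fin D → ℝ => (g i, g a)) :=
          (measurable_pi_apply i).prodMk (measurable_pi_apply a)
        have hmap := SGaux.pi_map_pair (stdGaussian D) hia
        calc ∫⁻ g, ENNReal.ofReal ((F g i)^2) ∂stdGaussianMatrix n D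
            = ∫⁻ p, ENNReal.ofReal ((euclDot p.1 p.2 / euclNormSq p.1)^2)
                ∂((stdGaussian D).prod (stdGaussian D)) := by
              rw [← hmap, lintegral_map hG hpair]
              rfl
          _ = ∫⁻ u, ∫⁻ x, ENNReal.ofReal
                ((euclDot u x / euclNormSq u)^2) ∂stdGaussian D ∂stdGaussian D :=
              lintegral_prod _ hG.aemeasurable
          _ = ∫⁻ u, ENNReal.ofReal ((euclNormSq u)⁻¹) ∂stdGaussian D := by
              refine lintegral_congr fun u => ?_
              have hdot : ∀ x : Fin D → ℝ,
                  euclDot u x / euclNormSq u = ∑ k, (u k / euclNormSq u) * x k := by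
                intro x
                simp only [euclDot, Finset.sum_div, mul_div_right_comm]
              calc ∫⁻ x, ENNReal.ofReal ((euclDot u x / euclNormSq u)^2) ∂stdGaussian D
                  = ∫⁻ x, ENNReal.ofReal
                      ((∑ k, (u k / euclNormSq u) * x k)^2) ∂stdGaussian D := by
                    refine lintegral_congr fun x => ?_
                    rw [hdot x]
                _ = ENNReal.ofReal (∑ k, (u k / euclNormSq u)^2) := by
                    rw [stdGaussian_eq_pi, SGaux.sq_sum_gauss]
                _ = ENNReal.ofReal ((euclNormSq u)⁻¹) := by
                    congr 1
                    simp only [div_pow, ← Finset.sum_div]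
                    rcases eq_or_ne (euclNormSq u) 0 with h | h
                    · rw [show (∑ k, (u k)^2) = euclNormSq u from rfl, h]
                      simp
                    · rw [show (∑ k, (u k)^2) = euclNormSq u from rfl]
                      field_simp
          _ = ENNReal.ofReal (((D:ℝ)-2)⁻¹) := lintegral_inv_normSq D hD
    _ = ENNReal.ofReal (((n : ℝ) - 1) / ((D : ℝ) - 2)) := by
        rw [Finset.sum_const, Finset.card_erase_of_mem (Finset.mem_univ a), Finset.card_univ,
          Fintype.card_fin, nsmul_eq_mul,
          show ((n - 1 : ℕ) : ENNReal) = ENNReal.ofReal ((n - 1 : ℕ) : ℝ)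
            from (ENNReal.ofReal_natCast _).symm,
          ← ENNReal.ofReal_mul (by positivity)]
        congr 1
        rw [Nat.cast_sub hn]
        push_cast
        rw [div_eq_mul_inv]
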